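/- Let ρ_XB = Σ_x P_X(x) |x⟩⟨x| ⊗ ρ_B^x be a classical-quantum density operator on H_X ⊗ H_B. Then q_corr(X|B)_ρ = max over quantum operations E: L(H_B) → L(H_{X'}) of Σ_x P_X(x) ⟨x| E(ρ_B^x) |x⟩, and this quantity equals p_guess(X|B)_ρ := max over POVMs {E_B^x}_x on H_B of Σ_x P_X(x) tr(E_B^x ρ_B^x). -/

import Mathlib

open Matrix
open scoped Kronecker ComplexConjugate ComplexOrder

noncomputable section

/-- Partial trace over the first (A) subsystem. -/
def ptraceA {A B : Type*} [Fintype A] (M : Matrix (A × B) (A × B) ℂ) :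
    Matrix B B ℂ :=
  Matrix.of fun i j => ∑ a : A, M (a, i) (a, j)

/-- Partial trace over the second (B) subsystem. -/
def ptraceB {A B : Type*} [Fintype B] (M : Matrix (A × B) (A × B) ℂ) :
    Matrix A A ℂ :=
  Matrix.of fun i j => ∑ b : B, M (i, b) (j, b)

/-- A density operator: positive semidefinite with unit trace. -/
def IsDensity {n : Type*} [Fintype n] (ρ : Matrix n n ℂ) : Prop :=
  ρ.PosSemidef ∧ ρ.trace = 1

/-- Conditional min-entropy `H_min(A|B)_ρ = - inf_σ D_∞(ρ ‖ id_A ⊗ σ)`, where the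
infimum ranges over density operators `σ` on `B` and
`D_∞(τ‖τ') = inf {λ | τ ≤ 2^λ τ'}`. -/
def Hmin {A B : Type*} [Fintype A] [Fintype B] [DecidableEq A] [DecidableEq B]
    (ρ : Matrix (A × B) (A × B) ℂ) : ℝ :=
  - sInf {l : ℝ | ∃ σ : Matrix B B ℂ, IsDensity σ ∧
      (((2 : ℝ) ^ l : ℝ) • ((1 : Matrix A A ℂ) ⊗ₖ σ) - ρ).PosSemidef}

open scoped Classical in
/-- Positive semidefinite square root (junk value `0` off the PSD cone). -/
def psqrt {n : Type*} [Fintype n] [DecidableEq n] (M : Matrix n n ℂ) : Matrix n n ℂ :=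
  if h : M.PosSemidef then
    (h.1.eigenvectorUnitary : Matrix n n ℂ) * diagonal ((↑) ∘ (√·) ∘ h.1.eigenvalues) *
      (star h.1.eigenvectorUnitary : Matrix n n ℂ) else 0

/-- Trace norm `‖M‖₁ = tr √(Mᴴ M)`. -/
def traceNorm {n : Type*} [Fintype n] [DecidableEq n] (M : Matrix n n ℂ) : ℝ :=
  (psqrt (Mᴴ * M)).trace.re

/-- Fidelity `F(ρ,σ) = ‖√ρ √σ‖₁`. -/
def fidelity {n : Type*} [Fintype n] [DecidableEq n] (ρ σ : Matrix n n ℂ) : ℝ :=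
  traceNorm (psqrt ρ * psqrt σ)

/-- Choi matrix of a linear map on matrices. -/
def choi {B A' : Type*} [Fintype B] [DecidableEq B] [Fintype A']
    (F : Matrix B B ℂ →ₗ[ℂ] Matrix A' A' ℂ) : Matrix (B × A') (B × A') ℂ :=
  Matrix.of fun p q => (F (Matrix.single p.1 q.1 1)) p.2 q.2

/-- A quantum operation (CPTP map): completely positive (PSD Choi matrix, by Choi's
theorem) and trace-preserving. -/
def IsCPTP {B A' : Type*} [Fintype B] [DecidableEq B] [Fintype A']
    (F : Matrix B B ℂ →ₗ[ℂ] Matrix A' A' ℂ) : Prop :=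
  (choi F).PosSemidef ∧ ∀ M : Matrix B B ℂ, (F M).trace = M.trace

/-- The map `id_A ⊗ F` applied to a bipartite operator. -/
def idTensor {A B A' : Type*} [Fintype B]
    (F : Matrix B B ℂ →ₗ[ℂ] Matrix A' A' ℂ) (ρ : Matrix (A × B) (A × B) ℂ) :
    Matrix (A × A') (A × A') ℂ :=
  Matrix.of fun p q => (F (Matrix.of fun b b' => ρ (p.1, b) (q.1, b'))) p.2 q.2

/-- The quadratic form `⟨ψ|M|ψ⟩` (real part). -/
def pureOverlap {n : Type*} [Fintype n] (ψ : n → ℂ) (M : Matrix n n ℂ) : ℝ :=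
  (∑ p, ∑ q, conj (ψ p) * M p q * ψ q).re

/-- The maximally entangled state `|Φ⟩ = d^{-1/2} ∑ₓ |x⟩|x⟩`. -/
def maxEnt (A : Type*) [Fintype A] [DecidableEq A] : A × A → ℂ :=
  fun p => if p.1 = p.2 then ((Real.sqrt (Fintype.card A))⁻¹ : ℝ) else 0

/-- `q_corr(A|B)_ρ`: `d_A` times the maximal squared fidelity with the maximally
entangled state achievable by quantum operations on `B`. -/
def qcorr {A B : Type*} [Fintype A] [Fintype B] [DecidableEq A] [DecidableEq B]
    (ρ : Matrix (A × B) (A × B) ℂ) : ℝ :=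
  (Fintype.card A : ℝ) *
    sSup {x : ℝ | ∃ F : Matrix B B ℂ →ₗ[ℂ] Matrix A A ℂ, IsCPTP F ∧
      x = pureOverlap (maxEnt A) (idTensor F ρ)}

/-- The completely mixed state. -/
def mixed (A : Type*) [Fintype A] [DecidableEq A] : Matrix A A ℂ :=
  ((Fintype.card A : ℂ)⁻¹) • (1 : Matrix A A ℂ)

/-- `q_decpl(A|B)_ρ`: `d_A` times the maximal squared fidelity with `τ_A ⊗ σ_B`. -/
def qdecpl {A B : Type*} [Fintype A] [Fintype B] [DecidableEq A] [DecidableEq B]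
    (ρ : Matrix (A × B) (A × B) ℂ) : ℝ :=
  (Fintype.card A : ℝ) *
    sSup {x : ℝ | ∃ σ : Matrix B B ℂ, IsDensity σ ∧
      x = (fidelity ρ ((mixed A) ⊗ₖ σ)) ^ 2}

/-- Reduced state `tr_C |ψ⟩⟨ψ|` of a pure state `ψ` on `(A ⊗ B) ⊗ C`. -/
def redL {S C : Type*} [Fintype C] (ψ : S × C → ℂ) : Matrix S S ℂ :=
  Matrix.of fun s s' => ∑ c, ψ (s, c) * conj (ψ (s', c))

/-- Reduced state `tr_B |ψ⟩⟨ψ|` on `A ⊗ C` of a pure state `ψ` on `(A ⊗ B) ⊗ C`. -/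
def redAC {A B C : Type*} [Fintype B] (ψ : (A × B) × C → ℂ) :
    Matrix (A × C) (A × C) ℂ :=
  Matrix.of fun p q => ∑ b, ψ ((p.1, b), p.2) * conj (ψ ((q.1, b), q.2))



section Aux

lemma linmap_apply {X B : Type*} [Fintype X] [Fintype B] [DecidableEq B]
    (F : Matrix B B ℂ →ₗ[ℂ] Matrix X X ℂ) (M : Matrix B B ℂ) (x y : X) :
    (F M) x y = ∑ b : B, ∑ c : B, M b c * (F (Matrix.single b c 1)) x y := by
  conv_lhs => rw [matrix_eq_sum_single M]
  have h : ∀ b c : B, Matrix.single b c (M b c)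
      = (M b c) • Matrix.single b c (1 : ℂ) := by
    intro b c; rw [Matrix.smul_single, smul_eq_mul, mul_one]
  simp_rw [h, map_sum, _root_.map_smul, Matrix.sum_apply, Matrix.smul_apply, smul_eq_mul]

lemma kron_psd {m n : Type*} [Fintype m] [Fintype n] [DecidableEq m] [DecidableEq n]
    {A : Matrix m m ℂ} {C : Matrix n n ℂ} (hA : A.PosSemidef) (hC : C.PosSemidef) :
    (A ⊗ₖ C).PosSemidef := by
  exact hA.kronecker hC

lemma std_psd {X : Type*} [Fintype X] [DecidableEq X] (x : X) :
    (Matrix.single x x (1 : ℂ)).PosSemidef := by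
  have h : Matrix.single x x (1 : ℂ)
      = (Matrix.single x x (1 : ℂ))ᴴ * (Matrix.single x x (1 : ℂ)) := by
    ext i j
    simp [Matrix.mul_apply, Matrix.single, Matrix.conjTranspose_apply, ite_and,
      apply_ite (starRingEnd ℂ)]
    split_ifs <;> simp
  rw [h]
  exact Matrix.posSemidef_conjTranspose_mul_self _

lemma sum_psd {n ι : Type*} [Fintype n] (s : Finset ι) (f : ι → Matrix n n ℂ)
    (h : ∀ i ∈ s, (f i).PosSemidef) : (∑ i ∈ s, f i).PosSemidef := by
  classical
  induction s using Finset.induction_on with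
  | empty => simpa using Matrix.PosSemidef.zero
  | insert _ _ hx ih =>
    rw [Finset.sum_insert hx]
    exact (h _ (Finset.mem_insert_self _ _)).add (ih fun i hi => h i (Finset.mem_insert_of_mem hi))

variable {X B : Type*} [Fintype X] [Fintype B] [DecidableEq X] [DecidableEq B]

/-- The canonical CPTP map associated with a POVM. -/
def povmMap (E : X → Matrix B B ℂ) : Matrix B B ℂ →ₗ[ℂ] Matrix X X ℂ where
  toFun M := Matrix.of fun x y => if x = y then (E x * M).trace else 0
  map_add' M N := by
    ext x y
    by_cases h : x = y <;> simp [h, Matrix.mul_add]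
  map_smul' c M := by
    ext x y
    by_cases h : x = y <;> simp [h, Matrix.mul_smul]

lemma trace_mul_std {B : Type*} [Fintype B] [DecidableEq B] (A : Matrix B B ℂ) (b c : B) :
    (A * Matrix.single b c 1).trace = A c b := by
  simp [Matrix.trace, Matrix.diag, Matrix.mul_apply, Matrix.single, ite_and]

lemma choi_povmMap (E : X → Matrix B B ℂ) :
    choi (povmMap E) = ∑ x : X, ((E x)ᵀ ⊗ₖ Matrix.single x x (1 : ℂ)) := by
  ext ⟨b, x'⟩ ⟨b', y'⟩
  simp only [choi, Matrix.of_apply, povmMap, LinearMap.coe_mk, AddHom.coe_mk, trace_mul_std,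
    Matrix.sum_apply, Matrix.kroneckerMap_apply, Matrix.transpose_apply]
  by_cases h : x' = y' <;> simp [h, Matrix.single, ite_and, mul_ite]

lemma povmMap_cptp (E : X → Matrix B B ℂ) (hpsd : ∀ x, (E x).PosSemidef)
    (hsum : (∑ x, E x) = 1) : IsCPTP (povmMap E) := by
  constructor
  · rw [choi_povmMap]
    exact sum_psd _ _ fun x _ => kron_psd (hpsd x).transpose (std_psd x)
  · intro M
    have h : ∑ x : X, (E x * M).trace = M.trace := by
      rw [← Matrix.trace_sum]
      simp_rw [← Finset.sum_mul, hsum, Matrix.one_mul]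
    simpa [povmMap, Matrix.trace, Matrix.diag] using h

end Aux

open scoped Pointwise

lemma trace_std {B : Type*} [Fintype B] [DecidableEq B] (b c : B) :
    (Matrix.single b c (1 : ℂ)).trace = if b = c then 1 else 0 := by
  by_cases h : b = c
  · subst h; simp [Matrix.trace, Matrix.diag, Matrix.single, ite_and, Finset.sum_ite_eq]
  · simp [Matrix.trace, Matrix.diag, Matrix.single, ite_and, Finset.sum_ite_eq, h]
    exact fun hh => h hh.symm

/-- for a classical-quantum state `ρ_XB = ∑ₓ P_X(x)|x⟩⟨x| ⊗ ρ_B^x`,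
`q_corr(X|B)_ρ = max_E ∑ₓ P_X(x) ⟨x|E(ρ_B^x)|x⟩`, and this equals
`p_guess(X|B)_ρ`, the maximal POVM guessing probability. -/
theorem stmt11 {X B : Type*} [Fintype X] [Fintype B] [DecidableEq X] [DecidableEq B]
    (P : X → ℝ) (hP : ∀ x, 0 ≤ P x) (hP1 : ∑ x, P x = 1)
    (ρB : X → Matrix B B ℂ) (hρB : ∀ x, IsDensity (ρB x)) :
    qcorr (∑ x : X, (P x : ℂ) • (Matrix.single x x (1 : ℂ) ⊗ₖ ρB x)) =
        sSup {v : ℝ | ∃ F : Matrix B B ℂ →ₗ[ℂ] Matrix X X ℂ, IsCPTP F ∧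
          v = ∑ x, P x * ((F (ρB x)) x x).re} ∧
      qcorr (∑ x : X, (P x : ℂ) • (Matrix.single x x (1 : ℂ) ⊗ₖ ρB x)) =
        sSup {v : ℝ | ∃ E : X → Matrix B B ℂ,
          (∀ x, (E x).PosSemidef) ∧ (∑ x, E x) = 1 ∧
          v = ∑ x, P x * ((E x * ρB x).trace.re)} := by
  set ρcq := ∑ x : X, (P x : ℂ) • (Matrix.single x x (1 : ℂ) ⊗ₖ ρB x) with hρcq
  -- block structure of the cq state
  have hblock : ∀ (x y : X), (Matrix.of fun b b' => ρcq ((x, b)) ((y, b')))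
      = if x = y then (P x : ℂ) • ρB x else 0 := by
    intro x y
    ext b b'
    simp only [hρcq, Matrix.of_apply, Matrix.sum_apply, Matrix.smul_apply,
      Matrix.kroneckerMap_apply, Matrix.single, smul_eq_mul]
    by_cases h : x = y
    · subst h
      simp [ite_and, mul_ite, ite_mul, Finset.sum_ite_eq]
    · simp [ite_and, mul_ite, ite_mul, Finset.sum_ite_eq, h]
  -- entries of idTensor
  have hM : ∀ (F : Matrix B B ℂ →ₗ[ℂ] Matrix X X ℂ) (x x' y y' : X),
      idTensor F ρcq ((x, x')) ((y, y'))
        = if x = y then (P x : ℂ) * (F (ρB x)) x' y' else 0 := by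
    intro F x x' y y'
    show (F (Matrix.of fun b b' => ρcq ((x, b)) ((y, b')))) x' y' = _
    rw [hblock]
    by_cases h : x = y
    · simp [h, _root_.map_smul]
    · simp [h]
  -- key overlap identity
  have hA : ∀ F : Matrix B B ℂ →ₗ[ℂ] Matrix X X ℂ,
      (Fintype.card X : ℝ) * pureOverlap (maxEnt X) (idTensor F ρcq)
        = ∑ x, P x * ((F (ρB x)) x x).re := by
    intro F
    rcases isEmpty_or_nonempty X with hX | hX
    · simp [pureOverlap]
    have hd : (0 : ℝ) < (Fintype.card X : ℝ) := by
      exact_mod_cast Fintype.card_pos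
    set c : ℝ := (Real.sqrt (Fintype.card X))⁻¹ with hc
    have key : (∑ p : X × X, ∑ q : X × X,
          conj (maxEnt X p) * (idTensor F ρcq) p q * maxEnt X q)
        = ((c : ℂ) * (c : ℂ)) * ∑ x, (P x : ℂ) * (F (ρB x)) x x := by
      simp only [maxEnt, Fintype.sum_prod_type, hM F, apply_ite (starRingEnd ℂ), map_zero,
        Complex.conj_ofReal, ite_mul, mul_ite, zero_mul, mul_zero]
      simp [Finset.sum_ite_eq, Finset.sum_ite_eq', Finset.mul_sum]
      refine Finset.sum_congr rfl fun x _ => ?_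
      rw [hc]
      push_cast
      ring
    have hre : pureOverlap (maxEnt X) (idTensor F ρcq)
        = (c * c) * ∑ x, P x * ((F (ρB x)) x x).re := by
      unfold pureOverlap
      rw [key]
      have h1 : ((c : ℂ) * (c : ℂ)) = ((c * c : ℝ) : ℂ) := by push_cast; ring
      rw [h1, Complex.re_ofReal_mul, Complex.re_sum]
      congr 1
      · exact Finset.sum_congr rfl fun x _ => by rw [Complex.re_ofReal_mul]
    rw [hre, ← mul_assoc]
    have hcc : (Fintype.card X : ℝ) * (c * c) = 1 := by
      rw [hc, ← mul_inv, Real.mul_self_sqrt hd.le, mul_inv_cancel₀ hd.ne']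
    rw [hcc, one_mul]
  -- part 1
  have h1 : qcorr ρcq = sSup {v : ℝ | ∃ F : Matrix B B ℂ →ₗ[ℂ] Matrix X X ℂ, IsCPTP F ∧
      v = ∑ x, P x * ((F (ρB x)) x x).re} := by
    have hsetS : {v : ℝ | ∃ F : Matrix B B ℂ →ₗ[ℂ] Matrix X X ℂ, IsCPTP F ∧
          v = ∑ x, P x * ((F (ρB x)) x x).re}
        = (Fintype.card X : ℝ) • {x : ℝ | ∃ F : Matrix B B ℂ →ₗ[ℂ] Matrix X X ℂ, IsCPTP F ∧
          x = pureOverlap (maxEnt X) (idTensor F ρcq)} := by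
      ext v
      simp only [Set.mem_smul_set, Set.mem_setOf_eq, smul_eq_mul]
      constructor
      · rintro ⟨F, hF, rfl⟩
        exact ⟨_, ⟨F, hF, rfl⟩, hA F⟩
      · rintro ⟨t, ⟨F, hF, rfl⟩, rfl⟩
        exact ⟨F, hF, hA F⟩
    rw [hsetS, Real.sSup_smul_of_nonneg (by positivity), smul_eq_mul]
    rfl
  -- set equality between CPTP formulation and POVM formulation
  have hsets : {v : ℝ | ∃ F : Matrix B B ℂ →ₗ[ℂ] Matrix X X ℂ, IsCPTP F ∧
        v = ∑ x, P x * ((F (ρB x)) x x).re}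
      = {v : ℝ | ∃ E : X → Matrix B B ℂ,
          (∀ x, (E x).PosSemidef) ∧ (∑ x, E x) = 1 ∧
          v = ∑ x, P x * ((E x * ρB x).trace.re)} := by
    ext v
    simp only [Set.mem_setOf_eq]
    constructor
    · rintro ⟨F, hF, rfl⟩
      refine ⟨fun x => Matrix.of fun b c => (F (Matrix.single c b 1)) x x, ?_, ?_, ?_⟩
      · intro x
        have h : (Matrix.of fun b c => (F (Matrix.single c b 1)) x x : Matrix B B ℂ)
            = ((choi F).submatrix (fun b => (b, x)) (fun b => (b, x)))ᵀ := by
          ext b c; rfl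
        dsimp only
        rw [h]
        exact (hF.1.submatrix _).transpose
      · ext b c
        rw [Matrix.sum_apply]
        have h : ∑ x : X, (Matrix.of fun b c => (F (Matrix.single c b 1)) x x : Matrix B B ℂ) b c
            = (F (Matrix.single c b 1)).trace := by
          simp [Matrix.trace, Matrix.diag]
        rw [h, hF.2, trace_std, Matrix.one_apply]
        by_cases hbc : b = c
        · simp [hbc]
        · simp [hbc]
          exact fun hh => hbc hh.symm
      · refine Finset.sum_congr rfl fun x _ => ?_
        congr 2
        have h : ((Matrix.of fun b c => (F (Matrix.single c b 1)) x x : Matrix B B ℂ)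
            * ρB x).trace = ∑ b : B, ∑ c : B, (F (Matrix.single c b 1)) x x * ρB x c b := by
          simp [Matrix.trace, Matrix.diag, Matrix.mul_apply]
        rw [h, linmap_apply F (ρB x) x x, Finset.sum_comm]
        exact Finset.sum_congr rfl fun b _ => Finset.sum_congr rfl fun cc _ => mul_comm _ _
    · rintro ⟨E, hpsd, hsum, rfl⟩
      refine ⟨povmMap E, povmMap_cptp E hpsd hsum, ?_⟩
      refine Finset.sum_congr rfl fun x _ => ?_
      congr 2
      simp [povmMap]
  exact ⟨h1, h1.trans (by rw [hsets])⟩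

end
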